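/- For all natural numbers a, m, r with a ≥ 2 and r ≥ 1, Σ_{k=1}^m k^{a−1}·C(r+m−k−1, r−1) = Σ_{b=1}^{a−1} E(a−1, b−1)·C(r+m+b−1, r+a−1), where C(·,·) is the binomial coefficient and E(·,·) are the Eulerian numbers. -/

import Mathlib

/-- Eulerian numbers: `E(0,0) = 1`, `E(0,j) = 0` for `j ≥ 1`, vanishing for negative second
argument, and `E(n,j) = (j+1)·E(n-1,j) + (n-j)·E(n-1,j-1)` for `n ≥ 1`. -/
def eulerianNum : ℕ → ℕ → ℕ
  | 0, 0 => 1
  | 0, _ + 1 => 0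
  | n + 1, 0 => eulerianNum n 0
  | n + 1, j + 1 => (j + 2) * eulerianNum n (j + 1) + (n - j) * eulerianNum n j

lemma eulerian_zero_of_lt : ∀ n j : ℕ, n < j → eulerianNum n j = 0 := by
  intro n
  induction n with
  | zero =>
    intro j hj
    obtain ⟨t, rfl⟩ : ∃ t, j = t + 1 := ⟨j - 1, by omega⟩
    rfl
  | succ n ih =>
    intro j hj
    obtain ⟨t, rfl⟩ : ∃ t, j = t + 1 := ⟨j - 1, by omega⟩
    simp only [eulerianNum]
    rw [ih (t + 1) (by omega), ih t (by omega), mul_zero, mul_zero]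
    rfl

lemma eulerian_diag (n : ℕ) : eulerianNum (n + 1) (n + 1) = 0 := by
  simp only [eulerianNum]
  rw [eulerian_zero_of_lt n (n + 1) (by omega), Nat.sub_self]
  simp

lemma chooseA (x j d : ℕ) :
    x * (x + j).choose (j + d) =
      d * (x + j + 1).choose (j + d + 1) + (j + 1) * (x + j).choose (j + d + 1) := by
  rcases lt_or_ge x d with h | h
  · rw [Nat.choose_eq_zero_of_lt (by omega), Nat.choose_eq_zero_of_lt (by omega),
      Nat.choose_eq_zero_of_lt (by omega)]
    simp
  · obtain ⟨y, rfl⟩ : ∃ y, x = d + y := ⟨x - d, by omega⟩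
    apply Nat.eq_of_mul_eq_mul_left (show 0 < j + d + 1 by omega)
    have k1 : (d + y + j + 1) * (d + y + j).choose (j + d) =
        (d + y + j + 1).choose (j + d + 1) * (j + d + 1) := Nat.add_one_mul_choose_eq _ _
    have k2 : (d + y + j).choose (j + d + 1) * (j + d + 1) =
        (d + y + j).choose (j + d) * (d + y + j - (j + d)) := Nat.choose_succ_right_eq _ _
    rw [show d + y + j - (j + d) = y by omega] at k2
    calc (j + d + 1) * ((d + y) * (d + y + j).choose (j + d))
        = d * ((d + y + j + 1) * (d + y + j).choose (j + d))
          + (j + 1) * ((d + y + j).choose (j + d) * y) := by ring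
      _ = d * ((d + y + j + 1).choose (j + d + 1) * (j + d + 1))
          + (j + 1) * ((d + y + j).choose (j + d + 1) * (j + d + 1)) := by rw [k1, k2]
      _ = (j + d + 1) * (d * (d + y + j + 1).choose (j + d + 1)
          + (j + 1) * (d + y + j).choose (j + d + 1)) := by ring


lemma Vlem : ∀ (p q s : ℕ),
    ∑ i ∈ Finset.range (s + 1), (i + p).choose p * (s - i + q).choose q
      = (s + p + q + 1).choose (p + q + 1) := by
  intro p
  induction p with
  | zero =>
    intro q s
    induction s with
    | zero => simp
    | succ s ih =>
      rw [Finset.sum_range_succ' (fun i => (i + 0).choose 0 * (s + 1 - i + q).choose q) (s + 1)]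
      have h1 : ∀ i ∈ Finset.range (s + 1),
          (i + 1 + 0).choose 0 * (s + 1 - (i + 1) + q).choose q
            = (i + 0).choose 0 * (s - i + q).choose q := by
        intro i hi
        simp only [Finset.mem_range] at hi
        rw [show s + 1 - (i + 1) = s - i by omega]
        simp
      rw [Finset.sum_congr rfl h1, ih]
      have hp : (s + 1 + 0 + q + 1).choose (0 + q + 1)
          = (s + 0 + q + 1).choose (0 + q) + (s + 0 + q + 1).choose (0 + q + 1) := by
        rw [show s + 1 + 0 + q + 1 = (s + 0 + q + 1) + 1 by omega]
        exact Nat.choose_succ_succ _ _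
      have h2 : (0 + 0).choose 0 * (s + 1 - 0 + q).choose q = (s + 0 + q + 1).choose (0 + q) := by
        simp only [Nat.add_zero, Nat.zero_add, Nat.choose_zero_right, one_mul, Nat.sub_zero]
        congr 1
        omega
      rw [h2, hp]
      omega
  | succ p ihp =>
    intro q s
    induction s with
    | zero => simp
    | succ s ihs =>
      have h1 : ∀ i ∈ Finset.range (s + 1),
          (i + 1 + (p + 1)).choose (p + 1) * (s + 1 - (i + 1) + q).choose q
            = (i + 1 + p).choose p * (s - i + q).choose q
              + (i + (p + 1)).choose (p + 1) * (s - i + q).choose q := by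
        intro i hi
        simp only [Finset.mem_range] at hi
        rw [show s + 1 - (i + 1) = s - i by omega,
          show i + 1 + (p + 1) = (i + 1 + p) + 1 by omega,
          Nat.choose_succ_succ, add_mul, show i + 1 + p = i + (p + 1) by omega]
      have e1 : ∑ i ∈ Finset.range (s + 1 + 1),
            (i + (p + 1)).choose (p + 1) * (s + 1 - i + q).choose q
          = (∑ i ∈ Finset.range (s + 1), (i + 1 + p).choose p * (s - i + q).choose q)
            + (∑ i ∈ Finset.range (s + 1), (i + (p + 1)).choose (p + 1) * (s - i + q).choose q)
            + (s + 1 + q).choose q := by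
        rw [Finset.sum_range_succ'
          (fun i => (i + (p + 1)).choose (p + 1) * (s + 1 - i + q).choose q) (s + 1)]
        rw [Finset.sum_congr rfl h1, Finset.sum_add_distrib]
        congr 1
        simp
      have h2 : ∀ i ∈ Finset.range (s + 1),
          (i + 1 + p).choose p * (s + 1 - (i + 1) + q).choose q
            = (i + 1 + p).choose p * (s - i + q).choose q := by
        intro i hi
        simp only [Finset.mem_range] at hi
        rw [show s + 1 - (i + 1) = s - i by omega]
      have e2 : (∑ i ∈ Finset.range (s + 1), (i + 1 + p).choose p * (s - i + q).choose q)
            + (s + 1 + q).choose q = (s + 1 + p + q + 1).choose (p + q + 1) := by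
        have hv := ihp q (s + 1)
        rw [Finset.sum_range_succ' (fun i => (i + p).choose p * (s + 1 - i + q).choose q) (s + 1),
          Finset.sum_congr rfl h2] at hv
        have h0 : ((0:ℕ) + p).choose p * (s + 1 - 0 + q).choose q = (s + 1 + q).choose q := by
          simp
        rw [h0] at hv
        exact hv
      have hp2 : (s + 1 + (p + 1) + q + 1).choose (p + 1 + q + 1)
          = (s + 1 + p + q + 1).choose (p + q + 1) + (s + (p + 1) + q + 1).choose (p + 1 + q + 1) := by
        rw [show s + 1 + (p + 1) + q + 1 = (s + 1 + p + q + 1) + 1 by omega,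
          show p + 1 + q + 1 = (p + q + 1) + 1 by omega]
        have := Nat.choose_succ_succ (s + 1 + p + q + 1) (p + q + 1)
        rw [this]
        congr 2
        omega
      rw [e1, ihs, hp2, ← e2]
      ring

lemma Vlem' (n q j m : ℕ) (hj : j ≤ n) :
    ∑ k ∈ Finset.range (m + 1), (k + j).choose n * (m - k + q).choose q
      = (m + j + q + 1).choose (n + q + 1) := by
  obtain ⟨d, rfl⟩ : ∃ d, n = j + d := ⟨n - j, by omega⟩
  rcases lt_or_ge m d with h | h
  · rw [Finset.sum_eq_zero, eq_comm, Nat.choose_eq_zero_of_lt (by omega)]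
    intro k hk
    simp only [Finset.mem_range] at hk
    rw [Nat.choose_eq_zero_of_lt (by omega), zero_mul]
  · obtain ⟨s, rfl⟩ : ∃ s, m = d + s := ⟨m - d, by omega⟩
    rw [show d + s + 1 = d + (s + 1) by omega, Finset.range_eq_Ico,
      ← Finset.sum_Ico_consecutive _ (Nat.zero_le d) (show d ≤ d + (s + 1) by omega),
      Finset.sum_Ico_eq_sum_range (fun i => (i + j).choose (j + d) * (d + s - i + q).choose q) d
        (d + (s + 1))]
    have h1 : ∑ k ∈ Finset.Ico 0 d, (k + j).choose (j + d) * (d + s - k + q).choose q = 0 := by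
      apply Finset.sum_eq_zero
      intro k hk
      simp only [Finset.mem_Ico] at hk
      rw [Nat.choose_eq_zero_of_lt (by omega), zero_mul]
    rw [h1, zero_add, show d + (s + 1) - d = s + 1 by omega]
    have h3 : ∀ i ∈ Finset.range (s + 1),
        (d + i + j).choose (j + d) * (d + s - (d + i) + q).choose q
          = (i + (j + d)).choose (j + d) * (s - i + q).choose q := by
      intro i hi
      simp only [Finset.mem_range] at hi
      rw [show d + i + j = i + (j + d) by omega, show d + s - (d + i) = s - i by omega]
    rw [Finset.sum_congr rfl h3, Vlem]
    congr 1
    omega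

lemma worpitzky : ∀ (n x : ℕ),
    x ^ n = ∑ j ∈ Finset.range (n + 1), eulerianNum n j * (x + j).choose n := by
  intro n
  induction n with
  | zero => intro x; simp [eulerianNum]
  | succ n ih =>
    intro x
    have step : ∀ j ∈ Finset.range (n + 1),
        eulerianNum n j * (x + j).choose n * x =
          (n - j) * eulerianNum n j * (x + j + 1).choose (n + 1)
            + (j + 1) * eulerianNum n j * (x + j).choose (n + 1) := by
      intro j hj
      simp only [Finset.mem_range] at hj
      have hA := chooseA x j (n - j)
      rw [show j + (n - j) = n by omega] at hA
      calc eulerianNum n j * (x + j).choose n * x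
          = eulerianNum n j * (x * (x + j).choose n) := by ring
        _ = eulerianNum n j * ((n - j) * (x + j + 1).choose (n + 1)
              + (j + 1) * (x + j).choose (n + 1)) := by rw [hA]
        _ = _ := by ring
    have lhs_eq : x ^ (n + 1)
        = (∑ j ∈ Finset.range (n + 1), (n - j) * eulerianNum n j * (x + j + 1).choose (n + 1))
          + (∑ j ∈ Finset.range (n + 1), (j + 1) * eulerianNum n j * (x + j).choose (n + 1)) := by
      rw [pow_succ, ih, Finset.sum_mul, Finset.sum_congr rfl step, Finset.sum_add_distrib]
    -- S2 analysis
    have hS2 : ∑ j ∈ Finset.range (n + 1), (j + 1) * eulerianNum n j * (x + j).choose (n + 1)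
        = (∑ j ∈ Finset.range (n + 1), (j + 1 + 1) * eulerianNum n (j + 1) * (x + (j + 1)).choose (n + 1))
          + (0 + 1) * eulerianNum n 0 * (x + 0).choose (n + 1) := by
      rw [← Finset.sum_range_succ' (fun j => (j + 1) * eulerianNum n j * (x + j).choose (n + 1)) (n + 1),
        Finset.sum_range_succ (fun j => (j + 1) * eulerianNum n j * (x + j).choose (n + 1)) (n + 1)]
      rw [eulerian_zero_of_lt n (n + 1) (by omega)]
      simp
    -- target analysis
    have hT : ∑ j ∈ Finset.range (n + 1 + 1), eulerianNum (n + 1) j * (x + j).choose (n + 1)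
        = (∑ j ∈ Finset.range (n + 1), eulerianNum (n + 1) (j + 1) * (x + (j + 1)).choose (n + 1))
          + eulerianNum (n + 1) 0 * (x + 0).choose (n + 1) :=
      Finset.sum_range_succ' _ (n + 1)
    have hrec : ∀ j ∈ Finset.range (n + 1),
        eulerianNum (n + 1) (j + 1) * (x + (j + 1)).choose (n + 1)
          = (j + 1 + 1) * eulerianNum n (j + 1) * (x + (j + 1)).choose (n + 1)
            + (n - j) * eulerianNum n j * (x + j + 1).choose (n + 1) := by
      intro j hj
      simp only [eulerianNum]
      rw [show x + (j + 1) = x + j + 1 by omega]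
      ring
    rw [lhs_eq, hT, Finset.sum_congr rfl hrec, Finset.sum_add_distrib, hS2]
    have h0 : eulerianNum (n + 1) 0 = eulerianNum n 0 := by simp [eulerianNum]
    rw [h0]
    ring

/-- For `a ≥ 2`, `r ≥ 1`:
`Σ_{k=1}^m k^{a-1}·C(r+m-k-1, r-1) = Σ_{b=1}^{a-1} E(a-1, b-1)·C(r+m+b-1, r+a-1)`. -/
theorem stmt11 (a m r : ℕ) (ha : 2 ≤ a) (hr : 1 ≤ r) :
    ∑ k ∈ Finset.Icc 1 m, k ^ (a - 1) * (r + m - k - 1).choose (r - 1) =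
      ∑ b ∈ Finset.Icc 1 (a - 1),
        eulerianNum (a - 1) (b - 1) * (r + m + b - 1).choose (r + a - 1) := by
  obtain ⟨t, rfl⟩ : ∃ t, a = t + 1 + 1 := ⟨a - 2, by omega⟩
  set n := t + 1 with hn
  obtain ⟨q, rfl⟩ : ∃ q, r = q + 1 := ⟨r - 1, by omega⟩
  simp only [Nat.add_sub_cancel]
  have hL : ∑ k ∈ Finset.Icc 1 m, k ^ n * (q + 1 + m - k - 1).choose q
      = ∑ k ∈ Finset.range (m + 1), k ^ n * (m - k + q).choose q := by
    rw [← Finset.Ico_add_one_right_eq_Icc, Finset.sum_Ico_eq_sum_range,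
      Finset.sum_range_succ' (fun k => k ^ n * (m - k + q).choose q) m]
    have h0 : (0:ℕ) ^ n * (m - 0 + q).choose q = 0 := by
      rw [zero_pow (by omega), zero_mul]
    rw [h0, add_zero]
    apply Finset.sum_congr (by simp)
    intro k hk
    simp only [Finset.mem_range] at hk
    rw [show 1 + k = k + 1 by omega, show q + 1 + m - (k + 1) - 1 = m - (k + 1) + q by omega]
  have hL2 : ∑ k ∈ Finset.range (m + 1), k ^ n * (m - k + q).choose q
      = ∑ j ∈ Finset.range (n + 1), eulerianNum n j * (m + j + q + 1).choose (n + q + 1) := by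
    calc ∑ k ∈ Finset.range (m + 1), k ^ n * (m - k + q).choose q
        = ∑ k ∈ Finset.range (m + 1), ∑ j ∈ Finset.range (n + 1),
            eulerianNum n j * ((k + j).choose n * (m - k + q).choose q) := by
          refine Finset.sum_congr rfl fun k _ => ?_
          rw [worpitzky n k, Finset.sum_mul]
          exact Finset.sum_congr rfl fun j _ => by ring
      _ = ∑ j ∈ Finset.range (n + 1), ∑ k ∈ Finset.range (m + 1),
            eulerianNum n j * ((k + j).choose n * (m - k + q).choose q) := Finset.sum_comm
      _ = ∑ j ∈ Finset.range (n + 1), eulerianNum n j * (m + j + q + 1).choose (n + q + 1) := by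
          refine Finset.sum_congr rfl fun j hj => ?_
          simp only [Finset.mem_range] at hj
          rw [← Finset.mul_sum, Vlem' n q j m (by omega)]
  have hR : ∑ b ∈ Finset.Icc 1 n, eulerianNum n (b - 1) * (q + 1 + m + b - 1).choose (q + 1 + (n + 1) - 1)
      = ∑ j ∈ Finset.range n, eulerianNum n j * (m + j + q + 1).choose (n + q + 1) := by
    rw [← Finset.Ico_add_one_right_eq_Icc, Finset.sum_Ico_eq_sum_range]
    apply Finset.sum_congr (by simp)
    intro i hi
    simp only [Finset.mem_range] at hi
    rw [show 1 + i - 1 = i by omega, show q + 1 + m + (1 + i) - 1 = m + i + q + 1 by omega,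
      show q + 1 + (n + 1) - 1 = n + q + 1 by omega]
  rw [hL, hL2, hR, Finset.sum_range_succ, eulerian_diag t, zero_mul, add_zero]
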